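/- Let λ ∈ (0, 1/2), f a real-valued measurable function, and Q, Q̃ cubes with Q̃ ⊂ Q and |Q̃| > (1/2 + λ)|Q|. Then for suitable choices of median values, |m_f(Q) - m_f(Q̃)| ≤ a_λ(f;Q), where a_λ(f;Q) := ((f - m_f(Q))χ_Q)^*(λ|Q|). -/

import Mathlib

open MeasureTheory Set Metric

/-- The non-increasing rearrangement of a real-valued measurable function on `ℝⁿ`. -/
noncomputable def rearr {n : ℕ} (f : (Fin n → ℝ) → ℝ) (t : ℝ) : ℝ :=
  sInf {α : ℝ | 0 < α ∧ volume {x | α < |f x|} < ENNReal.ofReal t}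

/-- `m` is a median value of `f` over the set `Q`. -/
def IsMedian {n : ℕ} (f : (Fin n → ℝ) → ℝ) (Q : Set (Fin n → ℝ)) (m : ℝ) : Prop :=
  volume {x ∈ Q | m < f x} ≤ volume Q / 2 ∧ volume {x ∈ Q | f x < m} ≤ volume Q / 2

lemma exists_isMedian {n : ℕ} (f : (Fin n → ℝ) → ℝ) (hf : Measurable f)
    (Q : Set (Fin n → ℝ)) (hQ : MeasurableSet Q) (h0 : volume Q ≠ 0) (hfin : volume Q ≠ ⊤) :
    ∃ m, IsMedian f Q m := by
  set μ := (volume : Measure (Fin n → ℝ))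
  have hmeas : ∀ t : ℝ, MeasurableSet {x ∈ Q | f x < t} := fun t => by
    have : {x ∈ Q | f x < t} = Q ∩ f ⁻¹' (Iio t) := by ext x; simp [and_comm]
    rw [this]; exact hQ.inter (hf measurableSet_Iio)
  have hmeas' : ∀ t : ℝ, MeasurableSet {x ∈ Q | t < f x} := fun t => by
    have : {x ∈ Q | t < f x} = Q ∩ f ⁻¹' (Ioi t) := by ext x; simp [and_comm]
    rw [this]; exact hQ.inter (hf measurableSet_Ioi)
  set F : ℝ → ENNReal := fun t => μ {x ∈ Q | f x < t} with hF
  have Fmono : Monotone F := fun s t hst => measure_mono (fun x hx => ⟨hx.1, lt_of_lt_of_le hx.2 hst⟩)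
  set S : Set ℝ := {t | F t ≤ μ Q / 2} with hS
  have half_pos : 0 < μ Q / 2 := ENNReal.div_pos h0 (by norm_num)
  -- S nonempty
  have hne : S.Nonempty := by
    have htend : Filter.Tendsto (fun k : ℕ => F (-(k:ℝ))) Filter.atTop (nhds (μ (⋂ k : ℕ, {x ∈ Q | f x < -(k:ℝ)}))) :=
      tendsto_measure_iInter_atTop (fun k => (hmeas _).nullMeasurableSet)
        (fun i j hij => fun x hx => ⟨hx.1, lt_of_lt_of_le hx.2 (by have h2 : (i:ℝ) ≤ j := Nat.cast_le.mpr hij; linarith)⟩)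
        ⟨0, ne_top_of_le_ne_top hfin (measure_mono (fun x hx => hx.1))⟩
    have hempty : (⋂ k : ℕ, {x ∈ Q | f x < -(k:ℝ)}) = ∅ := by
      ext x; simp only [mem_iInter, mem_empty_iff_false, iff_false, not_forall]
      obtain ⟨k, hk⟩ := exists_nat_gt (-(f x))
      exact ⟨k, fun hx => absurd hx.2 (by linarith)⟩
    rw [hempty, measure_empty] at htend
    obtain ⟨k, hk⟩ := (htend.eventually_lt_const half_pos).exists
    exact ⟨-(k:ℝ), le_of_lt hk⟩
  -- S bdd above
  have hbig : ∃ k : ℕ, μ Q / 2 < F k := by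
    have htend : Filter.Tendsto (fun k : ℕ => F (k:ℝ)) Filter.atTop (nhds (μ (⋃ k : ℕ, {x ∈ Q | f x < (k:ℝ)}))) :=
      tendsto_measure_iUnion_atTop
        (fun i j hij => fun x hx => ⟨hx.1, lt_of_lt_of_le hx.2 (Nat.cast_le.2 hij)⟩)
    have huniv : (⋃ k : ℕ, {x ∈ Q | f x < (k:ℝ)}) = Q := by
      ext x; simp only [mem_iUnion, mem_setOf_eq]
      constructor
      · rintro ⟨k, hk, _⟩; exact hk
      · intro hx; obtain ⟨k, hk⟩ := exists_nat_gt (f x); exact ⟨k, hx, hk⟩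
    rw [huniv] at htend
    have : μ Q / 2 < μ Q := ENNReal.half_lt_self h0 hfin
    exact (htend.eventually_const_lt this).exists
  obtain ⟨k, hk⟩ := hbig
  have hbdd : BddAbove S := ⟨k, fun t ht => by
    by_contra h
    push_neg at h
    exact absurd (le_trans (Fmono h.le) ht) (not_le.2 hk)⟩
  set m := sSup S with hm
  refine ⟨m, ?_, ?_⟩
  · -- upper: μ {x ∈ Q | m < f x} ≤ μ Q / 2
    have key : ∀ t, m < t → μ {x ∈ Q | t ≤ f x} < μ Q / 2 + 1 ∧ μ {x ∈ Q | t ≤ f x} ≤ μ Q / 2 := by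
      intro t ht
      have htS : t ∉ S := fun h => absurd (le_csSup hbdd h) (not_le.2 ht)
      have hFt : μ Q / 2 < F t := lt_of_not_ge htS
      have hsplit : μ {x ∈ Q | t ≤ f x} = μ Q - F t := by
        have : {x ∈ Q | t ≤ f x} = Q \ {x ∈ Q | f x < t} := by
          ext x; simp only [mem_setOf_eq, mem_diff, not_and, not_lt]
          exact ⟨fun h => ⟨h.1, fun _ => h.2⟩, fun h => ⟨h.1, h.2 h.1⟩⟩
        rw [this, measure_diff (fun x hx => hx.1) (hmeas t).nullMeasurableSet
          (ne_top_of_le_ne_top hfin (measure_mono (fun x hx => hx.1)))]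
      constructor
      · rw [hsplit]; exact lt_of_le_of_lt (tsub_le_tsub_left hFt.le _)
          (lt_of_le_of_lt (by rw [ENNReal.sub_half hfin]) (ENNReal.lt_add_right
            (ne_top_of_le_ne_top hfin (by exact le_trans ENNReal.half_le_self le_rfl)) one_ne_zero))
      · rw [hsplit]
        calc μ Q - F t ≤ μ Q - μ Q / 2 := tsub_le_tsub_left hFt.le _
          _ = μ Q / 2 := ENNReal.sub_half hfin
    have hcover : {x ∈ Q | m < f x} = ⋃ k : ℕ, {x ∈ Q | m + 1/((k:ℝ)+1) ≤ f x} := by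
      ext x; simp only [mem_setOf_eq, mem_iUnion]
      constructor
      · rintro ⟨hxQ, hx⟩
        obtain ⟨k, hk⟩ := exists_nat_one_div_lt (sub_pos.2 hx)
        exact ⟨k, hxQ, by linarith⟩
      · rintro ⟨k, hxQ, hx⟩
        have : (0:ℝ) < 1/((k:ℝ)+1) := by positivity
        exact ⟨hxQ, by linarith⟩
    rw [hcover]
    have hmono : Monotone (fun k : ℕ => {x ∈ Q | m + 1/((k:ℝ)+1) ≤ f x}) := by
      intro i j hij x hx
      have h2 : (i:ℝ) ≤ j := Nat.cast_le.mpr hij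
      have : 1/((j:ℝ)+1) ≤ 1/((i:ℝ)+1) := by
        apply one_div_le_one_div_of_le (by positivity); linarith
      exact ⟨hx.1, by have := hx.2; linarith⟩
    rw [hmono.measure_iUnion]
    refine iSup_le fun k => ?_
    have hpos : (0:ℝ) < 1/((k:ℝ)+1) := by positivity
    exact (key _ (by linarith)).2
  · -- lower: μ {x ∈ Q | f x < m} ≤ μ Q / 2
    have hcover : {x ∈ Q | f x < m} = ⋃ k : ℕ, {x ∈ Q | f x < m - 1/((k:ℝ)+1)} := by
      ext x; simp only [mem_setOf_eq, mem_iUnion]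
      constructor
      · rintro ⟨hxQ, hx⟩
        obtain ⟨k, hk⟩ := exists_nat_one_div_lt (sub_pos.2 hx)
        exact ⟨k, hxQ, by linarith⟩
      · rintro ⟨k, hxQ, hx⟩
        have : (0:ℝ) < 1/((k:ℝ)+1) := by positivity
        exact ⟨hxQ, by linarith⟩
    rw [hcover]
    have hmono : Monotone (fun k : ℕ => {x ∈ Q | f x < m - 1/((k:ℝ)+1)}) := by
      intro i j hij x hx
      have h2 : (i:ℝ) ≤ j := Nat.cast_le.mpr hij
      have : 1/((j:ℝ)+1) ≤ 1/((i:ℝ)+1) := by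
        apply one_div_le_one_div_of_le (by positivity); linarith
      exact ⟨hx.1, by have := hx.2; linarith⟩
    rw [hmono.measure_iUnion]
    refine iSup_le fun k => ?_
    have hpos : (0:ℝ) < 1/((k:ℝ)+1) := by positivity
    obtain ⟨s, hsS, hs⟩ := exists_lt_of_lt_csSup hne (show m - 1/((k:ℝ)+1) < m by linarith)
    exact le_trans (Fmono hs.le) hsS
lemma rearr_nonneg {n : ℕ} (f : (Fin n → ℝ) → ℝ) (t : ℝ) : 0 ≤ rearr f t :=
  Real.sInf_nonneg (fun _ hα => hα.1.le)

lemma volume_lt_rearr_le {n : ℕ} (g : (Fin n → ℝ) → ℝ) (t : ℝ)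
    (hS : {α : ℝ | 0 < α ∧ volume {x | α < |g x|} < ENNReal.ofReal t}.Nonempty) :
    volume {x | rearr g t < |g x|} ≤ ENNReal.ofReal t := by
  set S := {α : ℝ | 0 < α ∧ volume {x | α < |g x|} < ENNReal.ofReal t} with hSdef
  set a := rearr g t with ha
  have hbdd : BddBelow S := ⟨0, fun α hα => hα.1.le⟩
  have hanon : 0 ≤ a := rearr_nonneg g t
  have hcover : {x | a < |g x|} = ⋃ k : ℕ, {x | a + 1/((k:ℝ)+1) < |g x|} := by
    ext x; simp only [mem_setOf_eq, mem_iUnion]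
    constructor
    · intro hx
      obtain ⟨k, hk⟩ := exists_nat_one_div_lt (sub_pos.2 hx)
      exact ⟨k, by linarith⟩
    · rintro ⟨k, hk⟩
      have : (0:ℝ) < 1/((k:ℝ)+1) := by positivity
      linarith
  rw [hcover]
  have hmono : Monotone (fun k : ℕ => {x | a + 1/((k:ℝ)+1) < |g x|}) := by
    intro i j hij x hx
    have h2 : (i:ℝ) ≤ j := Nat.cast_le.mpr hij
    have : 1/((j:ℝ)+1) ≤ 1/((i:ℝ)+1) := by
      apply one_div_le_one_div_of_le (by positivity); linarith
    simp only [mem_setOf_eq] at hx ⊢; linarith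
  rw [hmono.measure_iUnion]
  refine iSup_le fun k => ?_
  have hpos : (0:ℝ) < 1/((k:ℝ)+1) := by positivity
  have hlt : sInf S < a + 1/((k:ℝ)+1) := by
    have heq : sInf S = a := rfl
    rw [heq]; linarith
  obtain ⟨s, hsS, hs⟩ := (csInf_lt_iff hbdd hS).mp hlt
  refine le_trans (measure_mono fun x hx => ?_) hsS.2.le
  simp only [mem_setOf_eq] at hx ⊢; linarith
/-- Let `λ ∈ (0,1/2)` and let `Q̃ ⊆ Q` be cubes (closed sup-metric balls) with
`|Q̃| > (1/2 + λ)|Q|`. Then for suitable choices of median values,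
`|m_f(Q) - m_f(Q̃)| ≤ a_λ(f;Q)`. -/
theorem median_regularity_special {n : ℕ} (lam : ℝ) (hlam : lam ∈ Set.Ioo (0 : ℝ) (1/2))
    (f : (Fin n → ℝ) → ℝ) (hf : Measurable f)
    (c₁ c₂ : Fin n → ℝ) (r₁ r₂ : ℝ) (hr₁ : 0 < r₁) (hr₂ : 0 < r₂)
    (hsub : closedBall c₂ r₂ ⊆ closedBall c₁ r₁)
    (hvol : (1/2 + lam) * (volume (closedBall c₁ r₁)).toReal <
      (volume (closedBall c₂ r₂)).toReal) :
    ∃ m₁ m₂ : ℝ, IsMedian f (closedBall c₁ r₁) m₁ ∧ IsMedian f (closedBall c₂ r₂) m₂ ∧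
      |m₁ - m₂| ≤ rearr ((closedBall c₁ r₁).indicator fun x => f x - m₁)
        (lam * (volume (closedBall c₁ r₁)).toReal) := by
  obtain ⟨hlam0, hlam2⟩ := hlam
  have hQm : MeasurableSet (closedBall c₁ r₁) := measurableSet_closedBall
  have hQ'm : MeasurableSet (closedBall c₂ r₂) := measurableSet_closedBall
  have hQ0 : volume (closedBall c₁ r₁) ≠ 0 := (measure_closedBall_pos volume c₁ hr₁).ne'
  have hQ'0 : volume (closedBall c₂ r₂) ≠ 0 := (measure_closedBall_pos volume c₂ hr₂).ne'
  have hQfin : volume (closedBall c₁ r₁) ≠ ⊤ := measure_closedBall_lt_top.ne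
  have hQ'fin : volume (closedBall c₂ r₂) ≠ ⊤ := measure_closedBall_lt_top.ne
  obtain ⟨m₁, hm₁⟩ := exists_isMedian f hf _ hQm hQ0 hQfin
  obtain ⟨m₂, hm₂⟩ := exists_isMedian f hf _ hQ'm hQ'0 hQ'fin
  refine ⟨m₁, m₂, hm₁, hm₂, ?_⟩
  set g : (Fin n → ℝ) → ℝ := (closedBall c₁ r₁).indicator (fun x => f x - m₁) with hg
  set t : ℝ := lam * (volume (closedBall c₁ r₁)).toReal with htdef
  have hvQ : 0 < (volume (closedBall c₁ r₁)).toReal := ENNReal.toReal_pos hQ0 hQfin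
  have ht : 0 < t := mul_pos hlam0 hvQ
  have hgmeas : Measurable g := (hf.sub measurable_const).indicator hQm
  -- the defining set is nonempty
  have hSne : {α : ℝ | 0 < α ∧ volume {x | α < |g x|} < ENNReal.ofReal t}.Nonempty := by
    have hsub' : ∀ α : ℝ, 0 ≤ α → {x | α < |g x|} ⊆ closedBall c₁ r₁ := by
      intro α hα x hx
      by_contra hxQ
      have : g x = 0 := indicator_of_notMem hxQ _
      simp only [mem_setOf_eq, this, abs_zero] at hx
      linarith
    have htend : Filter.Tendsto (fun k : ℕ => volume {x | (k:ℝ)+1 < |g x|}) Filter.atTop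
        (nhds (volume (⋂ k : ℕ, {x | (k:ℝ)+1 < |g x|}))) := by
      refine tendsto_measure_iInter_atTop (fun k => ?_) (fun i j hij x hx => ?_) ⟨0, ?_⟩
      · exact (measurableSet_lt measurable_const hgmeas.abs).nullMeasurableSet
      · have h2 : (i:ℝ) ≤ j := Nat.cast_le.mpr hij
        simp only [mem_setOf_eq] at hx ⊢; linarith
      · exact ne_top_of_le_ne_top hQfin (measure_mono (hsub' _ (by norm_num)))
    have hempty : (⋂ k : ℕ, {x | (k:ℝ)+1 < |g x|}) = ∅ := by
      ext x; simp only [mem_iInter, mem_setOf_eq, mem_empty_iff_false, iff_false, not_forall,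
        not_lt]
      obtain ⟨k, hk⟩ := exists_nat_gt (|g x|)
      exact ⟨k, by linarith⟩
    rw [hempty, measure_empty] at htend
    obtain ⟨k, hk⟩ := (htend.eventually_lt_const (by positivity : (0:ENNReal) <
      ENNReal.ofReal t)).exists
    exact ⟨(k:ℝ)+1, by positivity, hk⟩
  have hkey := volume_lt_rearr_le g t hSne
  set a : ℝ := rearr g t with hadef
  have ha0 : 0 ≤ a := rearr_nonneg g t
  -- a bound transferred to reals: volume Q' / 2 ≤ ofReal t is impossible
  have himp : ¬ (volume (closedBall c₂ r₂) / 2 ≤ ENNReal.ofReal t) := by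
    intro hle
    have hto := ENNReal.toReal_mono ENNReal.ofReal_ne_top hle
    rw [ENNReal.toReal_div, ENNReal.toReal_ofReal ht.le] at hto
    simp only [ENNReal.toReal_ofNat] at hto
    rw [htdef] at hto
    nlinarith [hvol, hvQ]
  rw [abs_sub_le_iff]
  constructor
  · -- m₁ - m₂ ≤ a
    by_contra h
    push_neg at h
    set A := {x ∈ closedBall c₂ r₂ | m₂ < f x} with hA
    have hAm : MeasurableSet A := by
      have : A = closedBall c₂ r₂ ∩ f ⁻¹' (Ioi m₂) := by ext x; exact ⟨fun hx => ⟨hx.1, hx.2⟩, fun hx => ⟨hx.1, hx.2⟩⟩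
      rw [this]; exact hQ'm.inter (hf measurableSet_Ioi)
    have hAsub : A ⊆ closedBall c₂ r₂ := fun x hx => hx.1
    have hB : volume (closedBall c₂ r₂) / 2 ≤ volume (closedBall c₂ r₂ \ A) := by
      rw [measure_diff hAsub hAm.nullMeasurableSet
        (ne_top_of_le_ne_top hQ'fin (measure_mono hAsub))]
      calc volume (closedBall c₂ r₂) / 2
          = volume (closedBall c₂ r₂) - volume (closedBall c₂ r₂) / 2 :=
            (ENNReal.sub_half hQ'fin).symm
        _ ≤ volume (closedBall c₂ r₂) - volume A := tsub_le_tsub_left hm₂.1 _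
    have hBsub : closedBall c₂ r₂ \ A ⊆ {x | a < |g x|} := by
      rintro x ⟨hxQ', hxA⟩
      have hxf : f x ≤ m₂ := by
        by_contra hc; exact hxA ⟨hxQ', lt_of_not_ge hc⟩
      have hxQ : x ∈ closedBall c₁ r₁ := hsub hxQ'
      have hgx : g x = f x - m₁ := indicator_of_mem hxQ _
      simp only [mem_setOf_eq, hgx]
      rw [abs_sub_comm]
      calc a < m₁ - m₂ := h
        _ ≤ m₁ - f x := by linarith
        _ ≤ |m₁ - f x| := le_abs_self _
    exact himp (le_trans hB (le_trans (measure_mono hBsub) hkey))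
  · -- m₂ - m₁ ≤ a
    by_contra h
    push_neg at h
    set A := {x ∈ closedBall c₂ r₂ | f x < m₂} with hA
    have hAm : MeasurableSet A := by
      have : A = closedBall c₂ r₂ ∩ f ⁻¹' (Iio m₂) := by ext x; exact ⟨fun hx => ⟨hx.1, hx.2⟩, fun hx => ⟨hx.1, hx.2⟩⟩
      rw [this]; exact hQ'm.inter (hf measurableSet_Iio)
    have hAsub : A ⊆ closedBall c₂ r₂ := fun x hx => hx.1
    have hB : volume (closedBall c₂ r₂) / 2 ≤ volume (closedBall c₂ r₂ \ A) := by
      rw [measure_diff hAsub hAm.nullMeasurableSet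
        (ne_top_of_le_ne_top hQ'fin (measure_mono hAsub))]
      calc volume (closedBall c₂ r₂) / 2
          = volume (closedBall c₂ r₂) - volume (closedBall c₂ r₂) / 2 :=
            (ENNReal.sub_half hQ'fin).symm
        _ ≤ volume (closedBall c₂ r₂) - volume A := tsub_le_tsub_left hm₂.2 _
    have hBsub : closedBall c₂ r₂ \ A ⊆ {x | a < |g x|} := by
      rintro x ⟨hxQ', hxA⟩
      have hxf : m₂ ≤ f x := by
        by_contra hc; exact hxA ⟨hxQ', lt_of_not_ge hc⟩
      have hxQ : x ∈ closedBall c₁ r₁ := hsub hxQ'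
      have hgx : g x = f x - m₁ := indicator_of_mem hxQ _
      simp only [mem_setOf_eq, hgx]
      calc a < m₂ - m₁ := h
        _ ≤ f x - m₁ := by linarith
        _ ≤ |f x - m₁| := le_abs_self _
    exact himp (le_trans hB (le_trans (measure_mono hBsub) hkey))
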